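/- Each of the four composite maps βγ, γα, αβ and αβγ : T⁷ → T⁷ has no fixed points: for every x ∈ T⁷, (β∘γ)(x) ≠ x, (γ∘α)(x) ≠ x, (α∘β)(x) ≠ x, and (α∘β∘γ)(x) ≠ x. -/
import Mathlib


noncomputable section

/-- The 7-torus T⁷ = (ℝ/ℤ)⁷. -/
abbrev T7 := Fin 7 → AddCircle (1 : ℝ)

/-- The class of 1/2 in ℝ/ℤ. -/
def half : AddCircle (1 : ℝ) := ((1 / 2 : ℝ) : AddCircle (1 : ℝ))

/-- α : T⁷ → T⁷, α(x₁,…,x₇) = (x₁, x₂, x₃, −x₄, −x₅, −x₆, −x₇). -/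
def alphaT (x : T7) : T7 := ![x 0, x 1, x 2, -x 3, -x 4, -x 5, -x 6]

/-- β : T⁷ → T⁷, β(x₁,…,x₇) = (x₁, −x₂, −x₃, x₄, x₅, ½−x₆, −x₇). -/
def betaT (x : T7) : T7 := ![x 0, -x 1, -x 2, x 3, x 4, half - x 5, -x 6]

/-- γ : T⁷ → T⁷, γ(x₁,…,x₇) = (−x₁, x₂, −x₃, x₄, ½−x₅, x₆, ½−x₇). -/
def gammaT (x : T7) : T7 := ![-x 0, x 1, -x 2, x 3, half - x 4, x 5, half - x 6]

lemma half_ne_zero : half ≠ 0 := by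
  intro h
  rw [half, AddCircle.coe_eq_zero_iff] at h
  obtain ⟨n, hn⟩ := h
  rw [zsmul_eq_mul] at hn
  have hn' : (n : ℝ) * 1 = 1 / 2 := by exact_mod_cast hn
  have h2 : (2 * n : ℤ) = 1 := by exact_mod_cast (by linarith : (2 * (n:ℝ)) = 1)
  omega

/-- The composites βγ, γα, αβ and αβγ act freely on T⁷: none of them has a fixed point. -/
theorem composites_have_no_fixed_points :
    ∀ x : T7, betaT (gammaT x) ≠ x ∧ gammaT (alphaT x) ≠ x ∧ alphaT (betaT x) ≠ x ∧
      alphaT (betaT (gammaT x)) ≠ x := by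
  intro x
  refine ⟨fun h => ?_, fun h => ?_, fun h => ?_, fun h => ?_⟩
  · have h6 : -(half - x 6) = x 6 := congrFun h 6
    exact half_ne_zero (by linear_combination (norm := abel) -h6)
  · have h4 : half - -x 4 = x 4 := congrFun h 4
    exact half_ne_zero (by linear_combination (norm := abel) h4)
  · have h5 : -(half - x 5) = x 5 := congrFun h 5
    exact half_ne_zero (by linear_combination (norm := abel) -h5)
  · have h4 : -(half - x 4) = x 4 := congrFun h 4
    exact half_ne_zero (by linear_combination (norm := abel) -h4)
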